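/- Let 𝒦(ℓ²) denote the hyperspace of nonempty compact subsets of the real Hilbert space ℓ², equipped with the Hausdorff metric (equivalently, Vietoris) topology, which makes it a Polish space. Then the set { K ∈ 𝒦(ℓ²) : K ⊆ 𝔈 } of nonempty compact subsets of ℓ² contained in Erdős space 𝔈 is not a Borel subset of 𝒦(ℓ²). -/

import Mathlib

open Set Topology Filter

/-- Erdős space `𝔈`, as the subset of the real Hilbert space `ℓ²` consisting of the
square-summable sequences all of whose coordinates are rational. -/
def erdosSet : Set (lp (fun _ : ℕ => ℝ) 2) :=
  {x | ∀ n : ℕ, ∃ q : ℚ, x n = (q : ℝ)}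

namespace ErdP

open MeasureTheory
abbrev Bs := ℕ → ℕ

def cyl (l : List ℕ) (x : Bs) : Prop := ∀ i, i < l.length → x i = l.getD i 0

lemma isOpen_cyl (l : List ℕ) : IsOpen {x : Bs | cyl l x} := by
  have : {x : Bs | cyl l x} = ⋂ i ∈ Finset.range l.length, (fun x : Bs => x i) ⁻¹' {l.getD i 0} := by
    ext x; simp [cyl]
  rw [this]
  exact isOpen_biInter_finset fun i _ => (continuous_apply i).isOpen_preimage _ (isOpen_discrete _)

lemma cyl_basis {s : Set Bs} (hs : IsOpen s) {x : Bs} (hx : x ∈ s) :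
    ∃ k : ℕ, ∀ y : Bs, (∀ i < k, y i = x i) → y ∈ s := by
  obtain ⟨I, u, hu, hsub⟩ := isOpen_pi_iff.1 hs x hx
  refine ⟨(I.sup id) + 1, fun y hy => hsub ?_⟩
  intro a ha
  have : y a = x a := hy a (Nat.lt_succ_of_le (Finset.le_sup (f := id) ha))
  rw [this]; exact (hu a ha).2

lemma cyl_self (x : Bs) (k : ℕ) : cyl (List.ofFn (fun i : Fin k => x i)) x := by
  intro i hi
  simp only [List.length_ofFn] at hi
  simp [List.getD, List.getElem?_ofFn, hi]

lemma cyl_mono {l : List ℕ} {x y : Bs} (h : cyl l x) (hy : ∀ i < l.length, y i = x i) : cyl l y := by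
  intro i hi; rw [hy i hi]; exact h i hi

lemma length_ofFn' (x : Bs) (k : ℕ) : (List.ofFn (fun i : Fin k => x i)).length = k := by simp

/-- basic open sets of `Bs × Bs`, enumerated by `ℕ`. -/
def bas (n : ℕ) : Set (Bs × Bs) :=
  {p | cyl (Denumerable.ofNat (List ℕ × List ℕ) n).1 p.1 ∧ cyl (Denumerable.ofNat (List ℕ × List ℕ) n).2 p.2}

lemma isOpen_bas (n : ℕ) : IsOpen (bas n) := by
  have : bas n = ({x : Bs | cyl (Denumerable.ofNat (List ℕ × List ℕ) n).1 x} ×ˢ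
      {x : Bs | cyl (Denumerable.ofNat (List ℕ × List ℕ) n).2 x}) := rfl
  rw [this]; exact (isOpen_cyl _).prod (isOpen_cyl _)

lemma bas_basis {s : Set (Bs × Bs)} (hs : IsOpen s) {p : Bs × Bs} (hp : p ∈ s) :
    ∃ n, p ∈ bas n ∧ bas n ⊆ s := by
  obtain ⟨u, v, hu, hv, hpu, hpv, huv⟩ := isOpen_prod_iff.1 hs p.1 p.2 hp
  obtain ⟨k, hk⟩ := cyl_basis hu hpu
  obtain ⟨m, hm⟩ := cyl_basis hv hpv
  refine ⟨Encodable.encode ((List.ofFn fun i : Fin k => p.1 i), (List.ofFn fun i : Fin m => p.2 i)), ?_, ?_⟩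
  · constructor <;> simp only [bas, Denumerable.ofNat_encode] <;> [exact cyl_self p.1 k; exact cyl_self p.2 m]
  · rintro ⟨a, b⟩ ⟨ha, hb⟩
    simp only [Denumerable.ofNat_encode] at ha hb
    have h1 : a ∈ u := hk a (by intro i hi; have := ha i (by simpa using hi); simpa [List.getD, List.getElem?_ofFn, hi] using this)
    have h2 : b ∈ v := hm b (by intro i hi; have := hb i (by simpa using hi); simpa [List.getD, List.getElem?_ofFn, hi] using this)
    exact huv ⟨h1, h2⟩

/-- the `y`-parametrized universal closed set. -/
def RR (y : Bs) : Set (Bs × Bs) := {p | ∀ n, y n ≠ 0 → p ∉ bas n}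

lemma exists_RR_eq {B : Set (Bs × Bs)} (hB : IsClosed B) : ∃ y, RR y = B := by
  classical
  refine ⟨fun n => if bas n ⊆ Bᶜ then 1 else 0, ?_⟩
  ext p
  constructor
  · intro hp
    by_contra hpB
    obtain ⟨n, hpn, hsub⟩ := bas_basis hB.isOpen_compl (hpB : p ∈ Bᶜ)
    exact hp n (by simp [hsub]) hpn
  · intro hpB n hn hpn
    by_cases h : bas n ⊆ Bᶜ
    · exact h hpn hpB
    · simp [h] at hn

/-- the universal analytic set (sections). -/
def GG (y : Bs) : Set Bs := {x | ∃ z, (x, z) ∈ RR y}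

lemma analytic_eq_GG {A : Set Bs} (hA : AnalyticSet A) (hne : A.Nonempty) : ∃ y, A = GG y := by
  rw [AnalyticSet] at hA
  rcases hA with h | ⟨f, hf, hfr⟩
  · exact absurd h (by rintro rfl; exact hne.ne_empty rfl)
  obtain ⟨y, hy⟩ := exists_RR_eq (B := {p : Bs × Bs | f p.2 = p.1})
    (isClosed_eq (hf.comp continuous_snd) continuous_fst)
  refine ⟨y, ?_⟩
  ext x
  simp only [GG, mem_setOf_eq, hy, ← hfr, mem_range]

/-- the diagonal analytic set. -/
def DD : Set Bs := {x | ∃ z, (x, z) ∈ RR x}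

lemma isClosed_hatC : IsClosed {p : Bs × Bs | p ∈ RR p.1} := by
  rw [← isOpen_compl_iff]
  have : {p : Bs × Bs | p ∈ RR p.1}ᶜ = ⋃ n, ({p : Bs × Bs | p.1 n ≠ 0} ∩ bas n) := by
    ext p; simp [RR, not_forall]
  rw [this]
  refine isOpen_iUnion fun n => IsOpen.inter ?_ (isOpen_bas n)
  have : {p : Bs × Bs | p.1 n ≠ 0} = (fun p : Bs × Bs => p.1 n) ⁻¹' {0}ᶜ := rfl
  rw [this]
  exact (isOpen_compl_singleton).preimage ((continuous_apply n).comp continuous_fst)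

instance : PolishSpace (Bs × Bs) := inferInstance

lemma analyticSet_DD : AnalyticSet DD := by
  have h1 : AnalyticSet {p : Bs × Bs | p ∈ RR p.1} := (isClosed_hatC).analyticSet
  have h2 := h1.image_of_continuous (continuous_fst)
  convert h2 using 1
  ext x
  constructor
  · rintro ⟨z, hz⟩; exact ⟨(x, z), hz, rfl⟩
  · rintro ⟨⟨a, b⟩, hab, rfl⟩; exact ⟨b, hab⟩

lemma DD_nonempty : DD.Nonempty := ⟨fun _ => 0, fun _ => 0, fun n hn => absurd rfl hn⟩

lemma DD_eq_range : ∃ gg : Bs → Bs, Continuous gg ∧ range gg = DD := by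
  have := analyticSet_DD
  rw [AnalyticSet] at this
  rcases this with h | h
  · exact absurd h DD_nonempty.ne_empty
  · exact h

lemma compl_DD_nonempty : DDᶜ.Nonempty := by
  refine ⟨fun _ => 1, ?_⟩
  rintro ⟨z, hz⟩
  have := hz (Encodable.encode (([] : List ℕ), ([] : List ℕ))) one_ne_zero
  refine this ?_
  constructor <;> · simp only [Denumerable.ofNat_encode]; intro i hi; simp at hi

lemma DD_not_measurableSet [MeasurableSpace Bs] [BorelSpace Bs] : ¬ MeasurableSet DD := by
  intro hD
  have hDc : AnalyticSet DDᶜ := hD.compl.analyticSet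
  obtain ⟨y, hy⟩ := analytic_eq_GG hDc compl_DD_nonempty
  by_cases hyD : y ∈ DD
  · have : y ∈ GG y := hyD
    rw [← hy] at this; exact this hyD
  · have : y ∈ GG y := by rw [← hy]; exact hyD
    exact hyD this


/-- the exponent sequence: strictly increasing, with growing gaps, coded by `u`. -/
def nn (u : Bs) (j : ℕ) : ℕ := (j + 1 + ∑ t ∈ Finset.range (j + 1), u t) ^ 2

lemma nn_ge (u : Bs) (j : ℕ) : j + 1 ≤ nn u j := by
  calc j + 1 ≤ j + 1 + ∑ t ∈ Finset.range (j + 1), u t := Nat.le_add_right _ _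
  _ ≤ _ := Nat.le_self_pow two_ne_zero _

lemma nn_gap (u : Bs) (j : ℕ) : nn u j + (j + 2) ≤ nn u (j + 1) := by
  have h : ∑ t ∈ Finset.range (j + 1), u t ≤ ∑ t ∈ Finset.range (j + 2), u t :=
    Finset.sum_le_sum_of_subset (Finset.range_subset_range.2 (Nat.le_succ _))
  set a := j + 1 + ∑ t ∈ Finset.range (j + 1), u t with ha
  have h2 : a + 1 ≤ j + 2 + ∑ t ∈ Finset.range (j + 2), u t := by omega
  calc a ^ 2 + (j + 2) ≤ a ^ 2 + 2 * a + 1 := by nlinarith [ha ▸ Nat.le_add_right (j+1) (∑ t ∈ Finset.range (j + 1), u t)]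
  _ = (a + 1) ^ 2 := by ring
  _ ≤ (j + 2 + ∑ t ∈ Finset.range (j + 2), u t) ^ 2 := Nat.pow_le_pow_left h2 2
  _ = nn u (j + 1) := rfl

lemma nn_strictMono (u : Bs) : StrictMono (nn u) :=
  strictMono_nat_of_lt_succ fun j => by have := nn_gap u j; omega

lemma nn_add_le (u : Bs) (j k : ℕ) : nn u j + k ≤ nn u (j + k) := by
  induction k with
  | zero => simp
  | succ k ih =>
      have h := nn_gap u (j + k)
      have : j + (k + 1) = (j + k) + 1 := by omega
      rw [this]
      omega

lemma nn_congr {u v : Bs} {j : ℕ} (h : ∀ t ≤ j, u t = v t) : nn u j = nn v j := by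
  unfold nn
  congr 1
  apply congrArg
  exact Finset.sum_congr rfl fun t ht => h t (by simpa [Nat.lt_succ_iff] using ht)

/-- weight of index `j`. -/
noncomputable def ww (u : Bs) (j : ℕ) : ℝ := (2 : ℝ) ^ (-(nn u j : ℤ))

lemma ww_pos (u : Bs) (j : ℕ) : 0 < ww u j := zpow_pos (by norm_num) _

lemma ww_le (u : Bs) (j : ℕ) : ww u j ≤ (1/2 : ℝ) ^ (j + 1) := by
  have h : (1/2 : ℝ) ^ (j+1) = (2:ℝ) ^ (-(j + 1 : ℤ)) := by
    rw [zpow_neg, one_div, inv_pow, ← zpow_natCast]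
    norm_num
  rw [ww, h]
  apply zpow_le_zpow_right₀ (by norm_num : (1:ℝ) ≤ 2)
  have := nn_ge u j
  omega

lemma summable_half_succ : Summable (fun j : ℕ => (1/2 : ℝ) ^ (j + 1)) := by
  have h := (summable_geometric_of_lt_one (by norm_num : (0:ℝ) ≤ 1/2)
    (by norm_num : (1/2:ℝ) < 1)).mul_right (1/2 : ℝ)
  exact h.congr fun j => (pow_succ (1/2:ℝ) j).symm

lemma summable_ww (u : Bs) : Summable (ww u) :=
  Summable.of_nonneg_of_le (fun j => (ww_pos u j).le) (fun j => (ww_le u j)) summable_half_succ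

noncomputable def pe (u : Bs) (k : ℕ) : ℝ := ∑ j ∈ Finset.range k, ww u j

noncomputable def EE (u : Bs) : ℝ := ∑' j, ww u j

lemma summable_ww_add (u : Bs) (a : ℕ) : Summable (fun j => ww u (a + j)) := by
  have := (summable_nat_add_iff a).2 (summable_ww u)
  exact this.congr fun j => by rw [add_comm]

lemma tail_le (u : Bs) (a : ℕ) : ∑' j, ww u (a + j) ≤ 2 * ww u a := by
  have h : ∀ j, ww u (a + j) ≤ ww u a * (1/2)^j := by
    intro j
    rw [ww, ww, one_div, inv_pow, ← zpow_natCast, ← zpow_neg,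
      ← zpow_add₀ (by norm_num : (2:ℝ) ≠ 0)]
    apply zpow_le_zpow_right₀ (by norm_num : (1:ℝ) ≤ 2)
    have := nn_add_le u a j
    omega
  calc ∑' j, ww u (a + j) ≤ ∑' j : ℕ, ww u a * (1/2)^j :=
        Summable.tsum_le_tsum h (summable_ww_add u a)
          ((summable_geometric_of_lt_one (by norm_num) (by norm_num)).mul_left _)
  _ = ww u a * 2 := by
        rw [tsum_mul_left, tsum_geometric_of_lt_one (by norm_num) (by norm_num)]
        norm_num
  _ = 2 * ww u a := by ring


lemma pe_add_tail (u : Bs) (a : ℕ) : pe u a + ∑' j, ww u (a + j) = EE u := by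
  have h := Summable.sum_add_tsum_nat_add a (summable_ww u)
  rw [pe, EE, ← h]
  congr 1
  exact tsum_congr fun j => by rw [add_comm]

lemma tail_pos (u : Bs) (a : ℕ) : 0 < ∑' j, ww u (a + j) :=
  Summable.tsum_pos (summable_ww_add u a) (fun j => (ww_pos u _).le) 0 (ww_pos u _)

lemma EE_sub_pe_pos (u : Bs) (a : ℕ) : 0 < EE u - pe u a := by
  have := tail_pos u a; have h := pe_add_tail u a; linarith

lemma EE_sub_pe_le (u : Bs) (a : ℕ) : EE u - pe u a ≤ 2 * ww u a := by
  have h := pe_add_tail u a; have := tail_le u a; linarith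

lemma pe_diff_nonneg (u : Bs) {a b : ℕ} (h : a ≤ b) : 0 ≤ pe u b - pe u a := by
  rw [pe, pe, ← Finset.sum_Ico_eq_sub _ h]
  exact Finset.sum_nonneg fun j _ => (ww_pos u j).le

lemma pe_diff_le (u : Bs) {a b : ℕ} (h : a ≤ b) : pe u b - pe u a ≤ 2 * ww u a := by
  rw [pe, pe, ← Finset.sum_Ico_eq_sub _ h]
  have h1 : ∑ j ∈ Finset.Ico a b, ww u j ≤ ∑' j, ww u (a + j) := by
    rw [Finset.sum_Ico_eq_sum_range]
    exact Summable.sum_le_tsum _ (fun j _ => (ww_pos u _).le) (summable_ww_add u a)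
  linarith [tail_le u a]

lemma EE_pos (u : Bs) : 0 < EE u := by
  have := EE_sub_pe_pos u 0; simpa [pe] using this

lemma EE_le_one (u : Bs) : EE u ≤ 1 := by
  have h : EE u ≤ ∑' j : ℕ, (1/2:ℝ)^(j+1) :=
    Summable.tsum_le_tsum (ww_le u) (summable_ww u) summable_half_succ
  have h2 : ∑' j : ℕ, (1/2:ℝ)^(j+1) = 1 := by
    have := tsum_geometric_of_lt_one (by norm_num : (0:ℝ) ≤ 1/2) (by norm_num : (1/2:ℝ) < 1)
    calc ∑' j : ℕ, (1/2:ℝ)^(j+1) = ∑' j : ℕ, (1/2:ℝ)^j * (1/2) :=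
          tsum_congr fun j => pow_succ _ _
    _ = (1 - 1/2)⁻¹ * (1/2) := by rw [tsum_mul_right, this]
    _ = 1 := by norm_num
  linarith

lemma EE_irrational (u : Bs) (q : ℚ) : EE u ≠ (q : ℝ) := by
  intro hq
  obtain ⟨K, hK⟩ : ∃ K : ℕ, (q.den : ℝ) < 2 ^ K := pow_unbounded_of_one_lt _ (by norm_num)
  set m := nn u K with hm
  -- the integer head
  set N : ℤ := ∑ j ∈ Finset.range (K + 1), 2 ^ (m - nn u j) with hN
  have hhead : (N : ℝ) = 2 ^ m * pe u (K + 1) := by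
    rw [hN, pe, Finset.mul_sum]
    push_cast
    apply Finset.sum_congr rfl
    intro j hj
    have hle : nn u j ≤ m := (nn_strictMono u).monotone (by
      simp only [Finset.mem_range] at hj; omega)
    have h1 : m = (m - nn u j) + nn u j := (Nat.sub_add_cancel hle).symm
    rw [ww, h1, pow_add, mul_assoc, ← zpow_natCast (2:ℝ) (nn u j),
      ← zpow_add₀ (by norm_num : (2:ℝ) ≠ 0)]
    simp
  set t : ℝ := 2 ^ m * (EE u - pe u (K + 1)) with ht
  have ht_pos : 0 < t := by
    apply mul_pos (by positivity) (EE_sub_pe_pos u (K + 1))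
  have ht_le : t ≤ (2:ℝ) ^ (-(K + 1 : ℤ)) := by
    have h1 : EE u - pe u (K+1) ≤ 2 * ww u (K+1) := EE_sub_pe_le u (K+1)
    have h2 : t ≤ 2^m * (2 * ww u (K+1)) := by
      apply mul_le_mul_of_nonneg_left h1 (by positivity)
    have h3 : (2:ℝ)^m * (2 * ww u (K+1)) = 2^((m : ℤ) + 1 - nn u (K+1)) := by
      rw [ww, ← zpow_natCast (2:ℝ) m]
      rw [show (2:ℝ) * (2:ℝ)^(-(nn u (K+1):ℤ)) = 2^(1 - (nn u (K+1):ℤ)) by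
        rw [sub_eq_add_neg, zpow_add₀ (by norm_num : (2:ℝ) ≠ 0)]; norm_num]
      rw [← zpow_add₀ (by norm_num : (2:ℝ) ≠ 0)]
      ring_nf
    have h4 : (m : ℤ) + 1 - nn u (K+1) ≤ -(K+1:ℤ) := by
      have := nn_gap u K
      rw [hm]
      push_cast
      omega
    calc t ≤ 2^((m:ℤ) + 1 - nn u (K+1)) := h3 ▸ h2
    _ ≤ (2:ℝ)^(-(K+1:ℤ)) := zpow_le_zpow_right₀ (by norm_num : (1:ℝ) ≤ 2) h4
  have htd : t * q.den < 1 := by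
    calc t * q.den ≤ (2:ℝ)^(-(K+1:ℤ)) * q.den :=
          mul_le_mul_of_nonneg_right ht_le (by positivity)
    _ < (2:ℝ)^(-(K+1:ℤ)) * 2^K := by
          apply mul_lt_mul_of_pos_left hK (by positivity)
    _ = 2⁻¹ := by
          rw [← zpow_natCast (2:ℝ) K, ← zpow_add₀ (by norm_num : (2:ℝ) ≠ 0)]
          norm_num
    _ < 1 := by norm_num
  -- t * q.den is a positive integer < 1 : contradiction
  set z : ℤ := 2 ^ m * q.num - q.den * N with hz
  have hden : (q.den : ℝ) ≠ 0 := Nat.cast_ne_zero.2 q.den_nz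
  have hdq : (q.den : ℝ) * (q : ℝ) = (q.num : ℝ) := by
    rw [Rat.cast_def]; field_simp
  have hq' : (q.den : ℝ) * EE u = (q.num : ℝ) := by rw [hq]; exact hdq
  have hzr : (z : ℝ) = t * q.den := by
    rw [hz]
    push_cast
    rw [hhead, ht, ← hq']
    ring
  have hz_pos : (0:ℝ) < z := by
    rw [hzr]; positivity
  have hz_lt : (z:ℝ) < 1 := by rw [hzr]; exact htd
  have h1 : 0 < z := by exact_mod_cast hz_pos
  have h2 : z < 1 := by exact_mod_cast hz_lt
  omega


/-! ### The tree construction -/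

def lex (s : List ℕ) : Bs := fun i => s.getD i 0

noncomputable def ee (s : List ℕ) : ℝ := pe (lex s) s.length

def pre (u : Bs) (k : ℕ) : List ℕ := List.ofFn fun i : Fin k => u i

lemma lex_prefix {s t : List ℕ} (h : s <+: t) {i : ℕ} (hi : i < s.length) :
    lex t i = lex s i := by
  obtain ⟨r, rfl⟩ := h
  simp [lex, List.getD, List.getElem?_append_left, hi]

lemma nn_lex_prefix {s t : List ℕ} (h : s <+: t) {j : ℕ} (hj : j < s.length) :
    nn (lex t) j = nn (lex s) j :=
  nn_congr fun i hi => lex_prefix h (lt_of_le_of_lt hi hj)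

lemma pe_congr {u v : Bs} {k : ℕ} (h : ∀ j, j < k → nn u j = nn v j) : pe u k = pe v k := by
  unfold pe
  apply Finset.sum_congr rfl
  intro j hj
  rw [ww, ww, h j (Finset.mem_range.1 hj)]

lemma ee_eq_pe_lex {s t : List ℕ} (h : s <+: t) : ee s = pe (lex t) s.length :=
  pe_congr fun j hj => (nn_lex_prefix h hj).symm

lemma ee_prefix_nonneg {s t : List ℕ} (h : s <+: t) : 0 ≤ ee t - ee s := by
  rw [ee_eq_pe_lex h, ee]
  exact pe_diff_nonneg _ h.length_le

lemma ee_prefix_le {s t : List ℕ} (h : s <+: t) :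
    ee t - ee s ≤ 2 * ww (lex t) s.length := by
  rw [ee_eq_pe_lex h, ee]
  exact pe_diff_le _ h.length_le

lemma ee_nonneg (s : List ℕ) : 0 ≤ ee s := by
  rw [ee, pe]
  exact Finset.sum_nonneg fun j _ => (ww_pos _ j).le

lemma ee_le_one (s : List ℕ) : ee s ≤ 1 := by
  have h1 : ee s ≤ EE (lex s) := by
    have := EE_sub_pe_pos (lex s) s.length
    rw [ee]; linarith
  linarith [EE_le_one (lex s)]

lemma ee_rat (s : List ℕ) : ∃ q : ℚ, ee s = (q : ℝ) := by
  refine ⟨∑ j ∈ Finset.range s.length, (2:ℚ) ^ (-(nn (lex s) j : ℤ)), ?_⟩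
  rw [ee, pe]
  push_cast
  rfl

/-- the tree of `x`, relative to `g`. -/
def Tr (g : Bs → Bs) (x : Bs) (s : List ℕ) : Prop :=
  ∀ i < s.length,
    (∀ w w', cyl s w → cyl s w' → ∀ j ≤ i, g w j = g w' j) →
    ∀ z, cyl s z → g z i = x i

lemma cyl_lex (s : List ℕ) : cyl s (lex s) := fun _ _ => rfl

lemma cyl_of_prefix {s t : List ℕ} (h : s <+: t) {z : Bs} (hz : cyl t z) : cyl s z := by
  intro i hi
  obtain ⟨r, rfl⟩ := h
  rw [hz i (by simp; omega)]
  simp [List.getD, List.getElem?_append_left, hi]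

lemma Tr_anti {g : Bs → Bs} {x : Bs} {s t : List ℕ} (hp : s <+: t) (ht : Tr g x t) :
    Tr g x s := by
  intro i hi H z hz
  have hi' : i < t.length := lt_of_lt_of_le hi hp.length_le
  have Ht : ∀ w w', cyl t w → cyl t w' → ∀ j ≤ i, g w j = g w' j := fun w w' hw hw' j hj =>
    H w w' (cyl_of_prefix hp hw) (cyl_of_prefix hp hw') j hj
  have h1 : g (lex t) i = x i := ht i hi' Ht (lex t) (cyl_lex t)
  have h2 : g z i = g (lex t) i := H z (lex t) hz (cyl_of_prefix hp (cyl_lex t)) i le_rfl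
  rw [h2, h1]

lemma Tr_nil (g : Bs → Bs) (x : Bs) : Tr g x [] := by
  intro i hi
  simp at hi

lemma Tr_congr {g : Bs → Bs} {x x' : Bs} {s : List ℕ} (h : ∀ i < s.length, x i = x' i)
    (ht : Tr g x s) : Tr g x' s := by
  intro i hi H z hz
  rw [← h i hi]
  exact ht i hi H z hz

lemma cyl_pre {u : Bs} {k : ℕ} {z : Bs} : cyl (pre u k) z ↔ ∀ i < k, z i = u i := by
  unfold cyl pre
  constructor
  · intro h i hi
    have := h i (by simpa using hi)
    simpa [List.getD, List.getElem?_ofFn, hi] using this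
  · intro h i hi
    simp only [List.length_ofFn] at hi
    simp [List.getD, List.getElem?_ofFn, hi, h i hi]

lemma length_pre (u : Bs) (k : ℕ) : (pre u k).length = k := by simp [pre]

lemma cyl_pre_self (u : Bs) (k : ℕ) : cyl (pre u k) u := cyl_pre.2 fun _ _ => rfl

lemma Tr_of_branch {g : Bs → Bs} {x b : Bs} (hb : g b = x) (k : ℕ) : Tr g x (pre b k) := by
  intro i hi H z hz
  have h1 : g z i = g b i := H z b hz (cyl_pre_self b k) i le_rfl
  rw [h1, hb]

lemma branch_g {g : Bs → Bs} (hg : Continuous g) {x b : Bs}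
    (h : ∀ k, Tr g x (pre b k)) : g b = x := by
  funext i
  -- find a cylinder around b on which g is constant in coordinates ≤ i
  have hopen : IsOpen {z : Bs | ∀ j ∈ Finset.range (i+1), g z j = g b j} := by
    have : {z : Bs | ∀ j ∈ Finset.range (i+1), g z j = g b j} =
        ⋂ j ∈ Finset.range (i+1), (fun z => g z j) ⁻¹' {g b j} := by
      ext z; simp
    rw [this]
    exact isOpen_biInter_finset fun j _ =>
      ((continuous_apply j).comp hg).isOpen_preimage _ (isOpen_discrete _)
  obtain ⟨k₀, hk₀⟩ := cyl_basis hopen (by simp : b ∈ _)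
  set k := max k₀ (i+1) with hk
  have hik : i < (pre b k).length := by rw [length_pre]; omega
  have H : ∀ w w', cyl (pre b k) w → cyl (pre b k) w' → ∀ j ≤ i, g w j = g w' j := by
    intro w w' hw hw' j hj
    have h1 : ∀ j ∈ Finset.range (i+1), g w j = g b j :=
      hk₀ w fun i' hi' => (cyl_pre.1 hw) i' (by omega)
    have h2 : ∀ j ∈ Finset.range (i+1), g w' j = g b j :=
      hk₀ w' fun i' hi' => (cyl_pre.1 hw') i' (by omega)
    rw [h1 j (by simp; omega), h2 j (by simp; omega)]
  exact h k i hik H b (cyl_pre_self b k)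

/-- the set of code-points of the tree of `x`. -/
def KS (g : Bs → Bs) (x : Bs) : Set ℝ := {r | ∃ s, Tr g x s ∧ ee s = r}

lemma KS_nonempty (g : Bs → Bs) (x : Bs) : (KS g x).Nonempty :=
  ⟨ee [], [], Tr_nil g x, rfl⟩

lemma KS_subset_Icc (g : Bs → Bs) (x : Bs) : KS g x ⊆ Icc (0:ℝ) 1 := by
  rintro r ⟨s, _, rfl⟩
  exact ⟨ee_nonneg s, ee_le_one s⟩

lemma isCompact_closure_KS (g : Bs → Bs) (x : Bs) : IsCompact (closure (KS g x)) :=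
  isCompact_Icc.of_isClosed_subset isClosed_closure
    (closure_minimal (KS_subset_Icc g x) isClosed_Icc)

lemma ee_pre (b : Bs) (k : ℕ) : ee (pre b k) = pe b k := by
  rw [ee, length_pre]
  apply pe_congr
  intro j hj
  apply nn_congr
  intro t ht
  show (pre b k).getD t 0 = b t
  have htk : t < k := lt_of_le_of_lt ht hj
  simp [pre, List.getD, List.getElem?_ofFn, htk]

lemma EE_mem_closure_KS {g : Bs → Bs} {x b : Bs} (hb : g b = x) :
    EE b ∈ closure (KS g x) := by
  have htend : Tendsto (fun k => ee (pre b k)) atTop (𝓝 (EE b)) := by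
    rw [show (fun k => ee (pre b k)) = fun k => pe b k by funext k; exact ee_pre b k]
    rw [Metric.tendsto_atTop]
    intro ε hε
    obtain ⟨M, hM⟩ := exists_pow_lt_of_lt_one hε (by norm_num : (1/2:ℝ) < 1)
    refine ⟨M + 1, fun k hk => ?_⟩
    have h1 : 0 < EE b - pe b k := EE_sub_pe_pos b k
    have h2 : EE b - pe b k ≤ 2 * ww b k := EE_sub_pe_le b k
    have h3 : ww b k ≤ (1/2:ℝ)^(k+1) := ww_le b k
    have h4 : (1/2:ℝ)^(k+1) ≤ (1/2:ℝ)^(M+1) :=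
      pow_le_pow_of_le_one (by norm_num) (by norm_num) (by omega)
    have h5 : (2:ℝ) * (1/2)^(M+1) = (1/2)^M := by
      rw [pow_succ]; ring
    rw [Real.dist_eq, abs_sub_comm, abs_of_pos h1]
    nlinarith
  exact mem_closure_of_tendsto htend
    (Filter.Eventually.of_forall fun k => ⟨pre b k, Tr_of_branch hb k, rfl⟩)

lemma prefix_snoc_getD {s t : List ℕ} (h : s <+: t) (hlt : s.length < t.length) :
    s ++ [t.getD s.length 0] <+: t := by
  obtain ⟨r, rfl⟩ := h
  have hr : r ≠ [] := by
    intro hr0; rw [hr0] at hlt; simp at hlt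
  obtain ⟨a, r', rfl⟩ := List.exists_cons_of_ne_nil hr
  have hget : (s ++ a :: r').getD s.length 0 = a := by
    rw [List.getD_eq_getElem _ _ (by simp)]
    rw [List.getElem_append_right (le_refl s.length)]
    simp
  rw [hget]
  exact ⟨r', by simp⟩

lemma ww_le_of_ge (u : Bs) (j M : ℕ) (h : M ≤ u j) : ww u j ≤ (1/2 : ℝ) ^ (j + 1 + M) := by
  have h2 : j + 1 + M ≤ nn u j := by
    have h3 : u j ≤ ∑ t ∈ Finset.range (j + 1), u t :=
      Finset.single_le_sum (f := u) (fun t _ => Nat.zero_le _) (Finset.self_mem_range_succ j)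
    have h4 : j + 1 + ∑ t ∈ Finset.range (j + 1), u t ≤ nn u j := Nat.le_self_pow two_ne_zero _
    omega
  have hh : (1/2 : ℝ) ^ (j+1+M) = (2:ℝ) ^ (-(j + 1 + M : ℤ)) := by
    rw [zpow_neg, one_div, inv_pow, ← zpow_natCast]
    norm_num
  rw [ww, hh]
  apply zpow_le_zpow_right₀ (by norm_num : (1:ℝ) ≤ 2)
  omega

lemma step_lemma {g : Bs → Bs} {x : Bs} {y : ℝ} (hy : ∀ q : ℚ, y ≠ (q : ℝ)) {s : List ℕ}
    (hTr : Tr g x s)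
    (hs : y ∈ closure {r | ∃ t, Tr g x t ∧ s <+: t ∧ ee t = r}) :
    ∃ m : ℕ, Tr g x (s ++ [m]) ∧
      y ∈ closure {r | ∃ t, Tr g x t ∧ (s ++ [m]) <+: t ∧ ee t = r} := by
  set A : ℕ → Set ℝ := fun m => {r | ∃ t, Tr g x t ∧ (s ++ [m]) <+: t ∧ ee t = r} with hA
  by_contra hcon
  push_neg at hcon
  have hAm : ∀ m, y ∉ closure (A m) := by
    intro m hmem
    by_cases hTm : Tr g x (s ++ [m])
    · exact hcon m hTm hmem
    · have : A m = ∅ := by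
        rw [hA]
        ext r
        simp only [mem_setOf_eq, mem_empty_iff_false, iff_false, not_exists]
        rintro t ⟨ht, hpre, _⟩
        exact hTm (Tr_anti hpre ht)
      rw [this, closure_empty] at hmem
      exact hmem
  -- for every M, y is within ρ M of ee s
  have key : ∀ M : ℕ, dist y (ee s) ≤ 2 * (1/2:ℝ) ^ (s.length + 1 + M) := by
    intro M
    set B : Set ℝ :=
      {r | ∃ t, Tr g x t ∧ s <+: t ∧ s.length < t.length ∧ M ≤ t.getD s.length 0 ∧ ee t = r}
      with hB
    have hsub : {r | ∃ t, Tr g x t ∧ s <+: t ∧ ee t = r} ⊆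
        (({ee s} : Set ℝ) ∪ ⋃ m ∈ Finset.range M, A m) ∪ B := by
      rintro r ⟨t, ht, hpre, rfl⟩
      by_cases hts : t = s
      · exact Or.inl (Or.inl (by simp [hts]))
      have hlt : s.length < t.length := by
        rcases lt_or_eq_of_le hpre.length_le with h | h
        · exact h
        · exact absurd (hpre.eq_of_length h).symm hts
      set m := t.getD s.length 0 with hm
      have hsm : s ++ [m] <+: t := prefix_snoc_getD hpre hlt
      by_cases hmM : m < M
      · exact Or.inl (Or.inr (mem_biUnion (Finset.mem_range.2 hmM) ⟨t, ht, hsm, rfl⟩))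
      · exact Or.inr ⟨t, ht, hpre, hlt, by omega, rfl⟩
    have hBball : B ⊆ Metric.closedBall (ee s) (2 * (1/2:ℝ) ^ (s.length + 1 + M)) := by
      rintro r ⟨t, _, hpre, hlt, hM, rfl⟩
      rw [Metric.mem_closedBall, Real.dist_eq, abs_of_nonneg (ee_prefix_nonneg hpre)]
      have h1 : ee t - ee s ≤ 2 * ww (lex t) s.length := ee_prefix_le hpre
      have h2 : ww (lex t) s.length ≤ (1/2:ℝ) ^ (s.length + 1 + M) := by
        apply ww_le_of_ge
        show M ≤ lex t s.length
        exact hM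
      linarith
    have hyB : y ∈ closure B := by
      have h1 := closure_mono hsub hs
      rw [closure_union, closure_union, (Finset.range M).closure_biUnion A] at h1
      rcases h1 with (h | h) | h
      · rw [closure_singleton] at h
        obtain ⟨q, hq⟩ := ee_rat s
        exact absurd (h.trans hq) (hy q)
      · obtain ⟨m, _, hm⟩ := mem_iUnion₂.1 h
        exact absurd hm (hAm m)
      · exact h
    have := closure_minimal hBball Metric.isClosed_closedBall hyB
    rwa [Metric.mem_closedBall] at this
  -- let M → ∞
  obtain ⟨q, hq⟩ := ee_rat s
  apply hy q
  rw [← hq]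
  have hd0 : dist y (ee s) = 0 := by
    by_contra hd
    have hdpos : 0 < dist y (ee s) := lt_of_le_of_ne dist_nonneg (Ne.symm hd)
    obtain ⟨M, hM⟩ := exists_pow_lt_of_lt_one (half_pos hdpos) (by norm_num : (1/2:ℝ) < 1)
    have h1 := key M
    have h2 : (1/2:ℝ) ^ (s.length + 1 + M) ≤ (1/2:ℝ) ^ M :=
      pow_le_pow_of_le_one (by norm_num) (by norm_num) (by omega)
    linarith
  exact eq_of_dist_eq_zero hd0


lemma exists_branch {g : Bs → Bs} (hg : Continuous g) {x : Bs} {y : ℝ}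
    (hy : y ∈ closure (KS g x)) (hirr : ∀ q : ℚ, y ≠ (q : ℝ)) : ∃ b : Bs, g b = x := by
  classical
  let P : List ℕ → Prop := fun s =>
    Tr g x s ∧ y ∈ closure {r | ∃ t, Tr g x t ∧ s <+: t ∧ ee t = r}
  have base : P [] := by
    refine ⟨Tr_nil g x, ?_⟩
    have he : {r | ∃ t, Tr g x t ∧ [] <+: t ∧ ee t = r} = KS g x := by
      ext r; simp [KS, List.nil_prefix]
    rw [he]; exact hy
  have step : ∀ s, P s → ∃ m, P (s ++ [m]) := fun s hs => step_lemma hirr hs.1 hs.2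
  let F : ℕ → {s : List ℕ // P s} := fun n =>
    Nat.rec ⟨[], base⟩
      (fun _ p => ⟨p.1 ++ [Classical.choose (step p.1 p.2)],
        Classical.choose_spec (step p.1 p.2)⟩) n
  have hFsucc : ∀ n, (F (n+1)).1 = (F n).1 ++ [Classical.choose (step (F n).1 (F n).2)] :=
    fun n => rfl
  have hlen : ∀ n, (F n).1.length = n := by
    intro n
    induction n with
    | zero => rfl
    | succ n ih => rw [hFsucc n]; simp [ih]
  have hpre2 : ∀ n, (F n).1 <+: (F (n+1)).1 := fun n => ⟨_, (hFsucc n).symm⟩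
  have hchain : ∀ n k, n ≤ k → (F n).1 <+: (F k).1 := by
    intro n k hnk
    induction k with
    | zero =>
        have : n = 0 := Nat.le_zero.1 hnk
        subst this; exact List.prefix_refl _
    | succ k ih =>
        rcases Nat.lt_or_ge n (k+1) with h | h
        · exact (ih (Nat.lt_succ_iff.1 h)).trans (hpre2 k)
        · have : n = k + 1 := le_antisymm hnk h
          subst this; exact List.prefix_refl _
  set b : Bs := fun i => (F (i+1)).1.getD i 0 with hb
  have hbF : ∀ k i, i < k → b i = (F k).1.getD i 0 := by
    intro k i hik
    obtain ⟨r, hr⟩ := hchain (i+1) k hik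
    have hilt : i < (F (i+1)).1.length := by have := hlen (i+1); omega
    calc b i = (F (i+1)).1.getD i 0 := rfl
    _ = ((F (i+1)).1 ++ r).getD i 0 := (List.getD_append _ _ _ _ hilt).symm
    _ = (F k).1.getD i 0 := by rw [hr]
  have hpreF : ∀ k, pre b k = (F k).1 := by
    intro k
    apply List.ext_getElem (by simp [pre, hlen])
    intro i h1 h2
    have hik : i < k := by simpa [pre] using h1
    have h3 : (pre b k)[i] = b i := by simp [pre]
    rw [h3, hbF k i hik, List.getD_eq_getElem _ _ h2]
  exact ⟨b, branch_g hg fun k => (hpreF k) ▸ (F k).2.1⟩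

/-- the compact set associated to `x`. -/
noncomputable def Kset (g : Bs → Bs) (x : Bs) : Set ℝ := closure (KS g x)

lemma Kset_rat_iff {g : Bs → Bs} (hg : Continuous g) (x : Bs) :
    (∀ y ∈ Kset g x, ∃ q : ℚ, y = (q : ℝ)) ↔ x ∉ range g := by
  constructor
  · rintro h ⟨b, rfl⟩
    obtain ⟨q, hq⟩ := h (EE b) (EE_mem_closure_KS rfl)
    exact EE_irrational b q hq
  · intro hx y hy
    by_contra hq
    push_neg at hq
    obtain ⟨b, hb⟩ := exists_branch hg hy (fun q h => hq q h)
    exact hx ⟨b, hb⟩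


/-! ### continuity of the compact-set map, and embedding into ℓ² -/

lemma KS_approx {g : Bs → Bs} {x x' : Bs} {N : ℕ} (hxx : ∀ i < N, x i = x' i) :
    ∀ r ∈ KS g x, ∃ r' ∈ KS g x', |r - r'| ≤ (1/2:ℝ)^N := by
  rintro r ⟨s, hs, rfl⟩
  by_cases hsN : s.length ≤ N
  · exact ⟨ee s, ⟨s, Tr_congr (fun i hi => hxx i (lt_of_lt_of_le hi hsN)) hs, rfl⟩,
      by rw [sub_self, abs_zero]; positivity⟩
  · push_neg at hsN
    set s' := s.take N with hs'
    have hpre : s' <+: s := List.take_prefix N s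
    have hlen' : s'.length = N := by
      rw [hs', List.length_take]; omega
    have hTr' : Tr g x' s' :=
      Tr_congr (fun i hi => hxx i (by rwa [hlen'] at hi)) (Tr_anti hpre hs)
    refine ⟨ee s', ⟨s', hTr', rfl⟩, ?_⟩
    have h0 := ee_prefix_nonneg hpre
    have h1 := ee_prefix_le hpre
    have h2 : ww (lex s) s'.length ≤ (1/2:ℝ)^(s'.length + 1) := ww_le _ _
    rw [abs_of_nonneg (by linarith)]
    rw [hlen'] at h1 h2
    have h3 : (2:ℝ) * (1/2)^(N+1) = (1/2)^N := by rw [pow_succ]; ring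
    linarith

lemma hausdorffEdist_KS_le {g : Bs → Bs} {x x' : Bs} {N : ℕ} (hxx : ∀ i < N, x i = x' i) :
    EMetric.hausdorffEdist (KS g x) (KS g x') ≤ ENNReal.ofReal ((1/2:ℝ)^N) := by
  apply EMetric.hausdorffEdist_le_of_mem_edist
  · intro r hr
    obtain ⟨r', hr', hd⟩ := KS_approx hxx r hr
    exact ⟨r', hr', by rw [edist_dist]; exact ENNReal.ofReal_le_ofReal (by rwa [Real.dist_eq])⟩
  · intro r hr
    obtain ⟨r', hr', hd⟩ := KS_approx (g := g) (fun i hi => (hxx i hi).symm) r hr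
    exact ⟨r', hr', by rw [edist_dist]; exact ENNReal.ofReal_le_ofReal (by rwa [Real.dist_eq])⟩

abbrev ℓ2 : Type := lp (fun _ : ℕ => ℝ) 2

noncomputable def jm (t : ℝ) : ℓ2 := lp.single 2 0 t

lemma isometry_jm : Isometry jm := by
  apply Isometry.of_dist_eq
  intro t t'
  have hsub : jm t - jm t' = lp.single 2 0 (t - t') := by
    apply lp.ext
    funext j
    rcases eq_or_ne j 0 with rfl | hj
    · simp [jm, lp.coeFn_sub, lp.single_apply_self]
    · simp [jm, lp.coeFn_sub, lp.single_apply_ne _ _ _ hj]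
  rw [dist_eq_norm, hsub]
  have h2 : (0:ℝ) < (2:ENNReal).toReal := by norm_num
  rw [lp.norm_single (E := fun _ : ℕ => ℝ) (by norm_num : (0:ENNReal) < 2) 0 (t - t'), Real.norm_eq_abs, Real.dist_eq]

open TopologicalSpace in
noncomputable def FF (g : Bs → Bs) (x : Bs) : NonemptyCompacts ℓ2 :=
  ⟨⟨jm '' Kset g x, (isCompact_closure_KS g x).image isometry_jm.continuous⟩,
    (((KS_nonempty g x).mono subset_closure).image jm)⟩

lemma edist_FF_le {g : Bs → Bs} {x x' : Bs} {N : ℕ} (hxx : ∀ i < N, x i = x' i) :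
    edist (FF g x) (FF g x') ≤ ENNReal.ofReal ((1/2:ℝ)^N) := by
  have h1 : edist (FF g x) (FF g x') =
      Metric.hausdorffEDist (jm '' Kset g x) (jm '' Kset g x') := rfl
  rw [h1, EMetric.hausdorffEdist_image isometry_jm, Kset, Kset,
    EMetric.hausdorffEdist_closure]
  exact hausdorffEdist_KS_le hxx

lemma continuous_FF {g : Bs → Bs} : Continuous (FF g) := by
  rw [continuous_iff_continuousAt]
  intro x
  rw [ContinuousAt, EMetric.tendsto_nhds]
  intro ε hε
  obtain ⟨N, hN⟩ : ∃ N : ℕ, ENNReal.ofReal ((1/2:ℝ)^N) < ε := by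
    rcases eq_or_ne ε ⊤ with rfl | hne
    · exact ⟨0, by simp [ENNReal.ofReal_lt_top]⟩
    · have hpos : 0 < ε.toReal := ENNReal.toReal_pos hε.ne' hne
      obtain ⟨N, hN⟩ := exists_pow_lt_of_lt_one hpos (by norm_num : (1/2:ℝ) < 1)
      exact ⟨N, (ENNReal.ofReal_lt_iff_lt_toReal (by positivity) hne).2 hN⟩
  have hopen : IsOpen {x' : Bs | ∀ i < N, x' i = x i} := by
    have : {x' : Bs | ∀ i < N, x' i = x i} =
        ⋂ i ∈ Finset.range N, (fun x' : Bs => x' i) ⁻¹' {x i} := by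
      ext z; simp
    rw [this]
    exact isOpen_biInter_finset fun i _ =>
      (continuous_apply i).isOpen_preimage _ (isOpen_discrete _)
  filter_upwards [hopen.mem_nhds (by simp)] with x' hx'
  calc edist (FF g x') (FF g x) ≤ ENNReal.ofReal ((1/2:ℝ)^N) := edist_FF_le hx'
  _ < ε := hN

lemma jm_mem_erdos (t : ℝ) : jm t ∈ erdosSet ↔ ∃ q : ℚ, t = (q : ℝ) := by
  simp only [jm, erdosSet, mem_setOf_eq]
  constructor
  · intro h
    have h0 := h 0
    rwa [lp.single_apply_self] at h0
  · rintro ⟨q, rfl⟩ n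
    rcases eq_or_ne n 0 with rfl | hn
    · exact ⟨q, lp.single_apply_self _ _ _⟩
    · exact ⟨0, by rw [lp.single_apply_ne _ _ _ hn]; simp⟩

lemma FF_mem_iff {g : Bs → Bs} (hg : Continuous g) (x : Bs) :
    (FF g x : Set ℓ2) ⊆ erdosSet ↔ x ∉ range g := by
  rw [← Kset_rat_iff hg x]
  constructor
  · intro h y hy
    exact (jm_mem_erdos y).1 (h (mem_image_of_mem jm hy))
  · rintro h z ⟨y, hy, rfl⟩
    exact (jm_mem_erdos y).2 (h y hy)

end ErdP


/-- The set `{K ∈ 𝒦(ℓ²) : K ⊆ 𝔈}` of nonempty compact subsets of `ℓ²` contained in Erdős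
space is not a Borel subset of the Polish space `𝒦(ℓ²)` of nonempty compact subsets of
`ℓ²` with the Hausdorff metric (equivalently, Vietoris) topology. -/
theorem compactsSubsetErdos_not_borel :
    ¬ @MeasurableSet (TopologicalSpace.NonemptyCompacts (lp (fun _ : ℕ => ℝ) 2))
      (borel (TopologicalSpace.NonemptyCompacts (lp (fun _ : ℕ => ℝ) 2)))
      {K : TopologicalSpace.NonemptyCompacts (lp (fun _ : ℕ => ℝ) 2) |
        (K : Set (lp (fun _ : ℕ => ℝ) 2)) ⊆ erdosSet} := by
  classical
  intro hS
  obtain ⟨g, hg, hrange⟩ := ErdP.DD_eq_range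
  letI : MeasurableSpace (TopologicalSpace.NonemptyCompacts ErdP.ℓ2) := borel _
  haveI : BorelSpace (TopologicalSpace.NonemptyCompacts ErdP.ℓ2) := ⟨rfl⟩
  letI : MeasurableSpace ErdP.Bs := borel _
  haveI : BorelSpace ErdP.Bs := ⟨rfl⟩
  have hF : Continuous (ErdP.FF g) := ErdP.continuous_FF
  have hpre : MeasurableSet (ErdP.FF g ⁻¹'
      {K : TopologicalSpace.NonemptyCompacts ErdP.ℓ2 | (K : Set ErdP.ℓ2) ⊆ erdosSet}) :=
    hF.measurable hS
  have heq : ErdP.FF g ⁻¹'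
      {K : TopologicalSpace.NonemptyCompacts ErdP.ℓ2 | (K : Set ErdP.ℓ2) ⊆ erdosSet} =
      (ErdP.DD)ᶜ := by
    ext x
    simp only [mem_preimage, mem_setOf_eq, mem_compl_iff]
    rw [ErdP.FF_mem_iff hg x, hrange]
  rw [heq] at hpre
  exact ErdP.DD_not_measurableSet ((compl_compl ErdP.DD) ▸ hpre.compl)
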